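/- For every n ≥ 3, the sum of the Sackin indices over all binary phylogenetic trees with n labeled leaves equals n·Σ_{k=1}^{n−1} (2n−k−3)!·k² / ((n−k−1)!·2^{n−k−1}). -/

import Mathlib

/-- Rooted trees with natural-number-labeled leaves. -/
inductive PTree where
  | leaf : ℕ → PTree
  | node : List PTree → PTree

namespace PTree

/-- The list of leaf labels of a tree, in left-to-right order. -/
def leaves : PTree → List ℕ
  | .leaf i => [i]
  | .node ts => ts.attach.flatMap (fun t => leaves t.1)
decreasing_by have := List.sizeOf_lt_of_mem t.2; simp_wf; omega

/-- The depth (number of arcs from the root) of the leaf labeled `i`. -/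
def leafDepth : PTree → ℕ → ℕ
  | .leaf _, _ => 0
  | .node ts, i =>
      (ts.attach.map (fun t => if i ∈ leaves t.1 then 1 + leafDepth t.1 i else 0)).sum
decreasing_by have := List.sizeOf_lt_of_mem t.2; simp_wf; omega

/-- The cophenetic value of `i` and `j`: the depth of their lowest common ancestor. -/
def cophen : PTree → ℕ → ℕ → ℕ
  | .leaf _, _, _ => 0
  | .node ts, i, j =>
      (ts.attach.map (fun t =>
        if i ∈ leaves t.1 ∧ j ∈ leaves t.1 then 1 + cophen t.1 i j else 0)).sum
decreasing_by have := List.sizeOf_lt_of_mem t.2; simp_wf; omega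

/-- The nodal distance between the leaves labeled `i` and `j`:
the number of edges on the undirected path joining them. -/
def ndist : PTree → ℕ → ℕ → ℕ
  | .leaf _, _, _ => 0
  | .node ts, i, j =>
      (ts.attach.map (fun t =>
        if i ∈ leaves t.1 ∧ j ∈ leaves t.1 then ndist t.1 i j
        else if i ∈ leaves t.1 then 1 + leafDepth t.1 i
        else if j ∈ leaves t.1 then 1 + leafDepth t.1 j
        else 0)).sum
decreasing_by have := List.sizeOf_lt_of_mem t.2; simp_wf; omega

/-- The list of the numbers of descendant leaves of each internal node,
with the root (if internal) first. -/
def allInternalSizes : PTree → List ℕ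
  | .leaf _ => []
  | .node ts => (PTree.node ts).leaves.length :: ts.attach.flatMap (fun t => allInternalSizes t.1)
decreasing_by have := List.sizeOf_lt_of_mem t.2; simp_wf; omega

/-- The total cophenetic index: sum of cophenetic values over pairs of distinct leaves. -/
def Phi (T : PTree) : ℕ :=
  ∑ i ∈ T.leaves.toFinset, ∑ j ∈ T.leaves.toFinset, if i < j then cophen T i j else 0

/-- The Sackin index: the sum of the depths of the leaves. -/
def Sackin (T : PTree) : ℕ := ∑ i ∈ T.leaves.toFinset, leafDepth T i

/-- The total area: the sum of the nodal distances between pairs of distinct leaves. -/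
def Darea (T : PTree) : ℕ :=
  ∑ i ∈ T.leaves.toFinset, ∑ j ∈ T.leaves.toFinset, if i < j then ndist T i j else 0

/-- A tree is binary when every internal node has exactly two children. -/
def IsBinary : PTree → Prop
  | .leaf _ => True
  | .node ts => ts.length = 2 ∧ ∀ t ∈ ts.attach, IsBinary t.1
decreasing_by have := List.sizeOf_lt_of_mem t.2; simp_wf; omega

/-- A tree is proper when every internal node has at least two children. -/
def Proper : PTree → Prop
  | .leaf _ => True
  | .node ts => 2 ≤ ts.length ∧ ∀ t ∈ ts.attach, Proper t.1
decreasing_by have := List.sizeOf_lt_of_mem t.2; simp_wf; omega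

/-- `T` is a phylogenetic tree with `n` leaves: a proper rooted tree whose leaves are
bijectively labeled by `{1, …, n}`. -/
def IsPhylo (n : ℕ) (T : PTree) : Prop :=
  Proper T ∧ T.leaves.Nodup ∧ T.leaves.toFinset = Finset.Icc 1 n

/-- A rooted caterpillar: a binary tree all of whose internal nodes have a leaf child. -/
def IsCaterpillar : PTree → Prop
  | .leaf _ => True
  | .node ts => ts.length = 2 ∧ (∃ t ∈ ts, ∃ i, t = PTree.leaf i) ∧
      ∀ t ∈ ts.attach, IsCaterpillar t.1
decreasing_by have := List.sizeOf_lt_of_mem t.2; simp_wf; omega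

/-- A binary tree is maximally balanced when every internal node is balanced, i.e. the
numbers of descendant leaves of its two children differ by at most one. -/
def MaxBalanced : PTree → Prop
  | .leaf _ => True
  | .node [a, b] =>
      |(a.leaves.length : ℤ) - (b.leaves.length : ℤ)| ≤ 1 ∧ MaxBalanced a ∧ MaxBalanced b
  | .node _ => False

/-- Canonical representative of an isomorphism class of binary trees: at every internal node
the subtree containing the smallest leaf label comes first. -/
def Canonical : PTree → Prop
  | .leaf _ => True
  | .node [a, b] => a.leaves.minimum < b.leaves.minimum ∧ Canonical a ∧ Canonical b
  | .node _ => False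

/-- The rooted caterpillar with `n` leaves labeled `1, …, n` (for `n ≥ 1`). -/
def caterpillar : ℕ → PTree
  | 0 => .leaf 1
  | 1 => .leaf 1
  | n + 2 => .node [caterpillar (n + 1), .leaf (n + 2)]

/-- `Replace T t₀ t₀' T'` holds when `T'` is obtained from `T` by replacing the subtree `t₀`
of `T` rooted at some node by the tree `t₀'`. -/
inductive Replace : PTree → PTree → PTree → PTree → Prop where
  | here (t₀ t₀' : PTree) : Replace t₀ t₀ t₀' t₀'
  | child (l r : List PTree) (a b t₀ t₀' : PTree) :
      Replace a t₀ t₀' b → Replace (.node (l ++ a :: r)) t₀ t₀' (.node (l ++ b :: r))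

/-- The probability of a binary phylogenetic tree with `n` leaves under the Yule model. -/
noncomputable def yuleP (n : ℕ) (T : PTree) : ℝ :=
  (2 ^ (n - 1) / (n.factorial : ℝ)) *
    ((allInternalSizes T).map (fun k => ((k : ℝ) - 1)⁻¹)).prod

end PTree
namespace PTree

theorem ind' {motive : PTree → Prop} (hleaf : ∀ i, motive (.leaf i))
    (hnode : ∀ ts, (∀ t ∈ ts, motive t) → motive (.node ts)) : ∀ t, motive t := by
  have H : ∀ n t, sizeOf t ≤ n → motive t := by
    intro n
    induction n with
    | zero => intro t ht; cases t <;> simp at ht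
    | succ n ih =>
      intro t ht
      cases t with
      | leaf i => exact hleaf i
      | node ts =>
        refine hnode ts fun t h => ih t ?_
        have := List.sizeOf_lt_of_mem h
        simp at ht
        omega
  exact fun t => H (sizeOf t) t le_rfl

end PTree
namespace PTree

theorem leaves_node' (ts : List PTree) : leaves (.node ts) = ts.flatMap leaves := by
  rw [leaves]; simp [List.flatMap_assoc]

@[simp] theorem leaves_leaf' (i : ℕ) : leaves (.leaf i) = [i] := by rw [leaves]

@[simp] theorem leaves_pair (a b : PTree) : leaves (.node [a,b]) = leaves a ++ leaves b := by
  rw [leaves_node']; simp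

theorem leafDepth_node' (ts : List PTree) (i : ℕ) :
    leafDepth (.node ts) i
      = (ts.map (fun t => if i ∈ leaves t then 1 + leafDepth t i else 0)).sum := by
  rw [leafDepth]; congr 1; rw [List.map_attach_eq_pmap]; simp

@[simp] theorem leafDepth_leaf' (i j : ℕ) : leafDepth (.leaf i) j = 0 := by rw [leafDepth]

theorem leafDepth_pair (a b : PTree) (i : ℕ) :
    leafDepth (.node [a,b]) i
      = (if i ∈ leaves a then 1 + leafDepth a i else 0)
        + (if i ∈ leaves b then 1 + leafDepth b i else 0) := by
  rw [leafDepth_node']; simp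

@[simp] theorem isBinary_leaf (i : ℕ) : IsBinary (.leaf i) := by rw [IsBinary]; trivial

theorem isBinary_pair (a b : PTree) : IsBinary (.node [a,b]) ↔ IsBinary a ∧ IsBinary b := by
  rw [IsBinary]; simp

@[simp] theorem canonical_leaf (i : ℕ) : Canonical (.leaf i) := by rw [Canonical]; trivial

theorem canonical_pair (a b : PTree) :
    Canonical (.node [a,b]) ↔ a.leaves.minimum < b.leaves.minimum ∧ Canonical a ∧ Canonical b := by
  rw [Canonical]

@[simp] theorem proper_leaf (i : ℕ) : Proper (.leaf i) := by rw [Proper]; trivial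

theorem proper_pair (a b : PTree) : Proper (.node [a,b]) ↔ Proper a ∧ Proper b := by
  rw [Proper]; simp

theorem proper_of_isBinary : ∀ t, IsBinary t → Proper t := by
  intro t
  induction t using ind' with
  | hleaf i => simp
  | hnode ts ih =>
    intro hb
    rw [IsBinary] at hb
    rw [Proper]
    obtain ⟨h2, hall⟩ := hb
    exact ⟨by omega, fun t ht => ih t.1 (by simpa using t.2) (hall t ht)⟩

theorem leaves_ne_nil_of_isBinary : ∀ t, IsBinary t → t.leaves ≠ [] := by
  intro t
  induction t using ind' with
  | hleaf i => simp
  | hnode ts ih =>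
    intro hb
    rw [IsBinary] at hb
    obtain ⟨h2, hall⟩ := hb
    match ts, h2 with
    | [a, b], _ =>
      have ha : IsBinary a := by simpa using hall ⟨a, by simp⟩ (by simp)
      have := ih a (by simp) ha
      simp [leaves_pair]
      intro h _; exact this h

end PTree
namespace PTree

theorem binInd {motive : PTree → Prop} (hleaf : ∀ i, motive (.leaf i))
    (hnode : ∀ a b, IsBinary a → IsBinary b → motive a → motive b → motive (.node [a,b])) :
    ∀ t, IsBinary t → motive t := by
  intro t
  induction t using ind' with
  | hleaf i => exact fun _ => hleaf i
  | hnode ts ih =>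
    intro hb
    rw [IsBinary] at hb
    obtain ⟨h2, hall⟩ := hb
    match ts, h2, hall, ih with
    | [a, b], _, hall, ih =>
      have ha : IsBinary a := by simpa using hall ⟨a, by simp⟩ (by simp)
      have hb : IsBinary b := by simpa using hall ⟨b, by simp⟩ (by simp)
      exact hnode a b ha hb (ih a (by simp) ha) (ih b (by simp) hb)

@[simp] theorem sackin_leaf (i : ℕ) : Sackin (.leaf i) = 0 := by
  rw [Sackin]; simp

theorem sackin_pair (a b : PTree) (h : (leaves a ++ leaves b).Nodup) :
    Sackin (.node [a,b])
      = Sackin a + Sackin b + (leaves a).length + (leaves b).length := by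
  have hna : (leaves a).Nodup := h.of_append_left
  have hnb : (leaves b).Nodup := h.of_append_right
  have hdisj : ∀ i ∈ leaves a, i ∉ leaves b := fun i hi => (List.disjoint_of_nodup_append h) hi
  rw [Sackin, Sackin, Sackin]
  simp only [leaves_pair, List.toFinset_append]
  have hd : Disjoint (leaves a).toFinset (leaves b).toFinset := by
    rw [Finset.disjoint_left]
    intro i hi
    simp only [List.mem_toFinset] at *
    exact hdisj i hi
  rw [Finset.sum_union hd]
  have h1 : ∀ i ∈ (leaves a).toFinset, leafDepth (.node [a,b]) i = 1 + leafDepth a i := by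
    intro i hi
    simp only [List.mem_toFinset] at hi
    rw [leafDepth_pair, if_pos hi, if_neg (hdisj i hi)]; omega
  have h2 : ∀ i ∈ (leaves b).toFinset, leafDepth (.node [a,b]) i = 1 + leafDepth b i := by
    intro i hi
    simp only [List.mem_toFinset] at hi
    have : i ∉ leaves a := fun ha' => hdisj i ha' hi
    rw [leafDepth_pair, if_neg this, if_pos hi]; omega
  rw [Finset.sum_congr rfl h1, Finset.sum_congr rfl h2]
  rw [Finset.sum_add_distrib, Finset.sum_add_distrib]
  simp only [Finset.sum_const, smul_eq_mul, mul_one]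
  rw [List.toFinset_card_of_nodup hna, List.toFinset_card_of_nodup hnb]
  ring

def grow (x : ℕ) : PTree → List PTree
  | .leaf i => [.node [.leaf i, .leaf x]]
  | .node [a, b] =>
      .node [.node [a,b], .leaf x] ::
        ((grow x a).map (fun a' => .node [a', b]) ++ (grow x b).map (fun b' => .node [a, b']))
  | _ => []

@[simp] theorem grow_leaf (x i : ℕ) : grow x (.leaf i) = [.node [.leaf i, .leaf x]] := rfl

theorem grow_pair (x : ℕ) (a b : PTree) :
    grow x (.node [a,b])
      = .node [.node [a,b], .leaf x] ::
        ((grow x a).map (fun a' => .node [a', b]) ++ (grow x b).map (fun b' => .node [a, b'])) := rfl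

end PTree
namespace PTree

theorem minimum_perm {l₁ l₂ : List ℕ} (h : l₁.Perm l₂) : l₁.minimum = l₂.minimum := by
  have key : ∀ {a b : List ℕ}, a.Perm b → a.minimum ≤ b.minimum := by
    intro a b hab
    match hm : b.minimum with
    | ⊤ =>
      have : b = [] := List.minimum_eq_top.mp hm
      subst this
      have : a = [] := hab.eq_nil
      simp [this]
    | (m : ℕ) =>
      have hmem : m ∈ b := List.minimum_mem hm
      have hma : m ∈ a := hab.mem_iff.mpr hmem
      exact List.minimum_le_of_mem' hma
  exact le_antisymm (key h) (key h.symm)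

theorem minimum_lt_of_forall {l : List ℕ} {x : ℕ} (hne : l ≠ []) (h : ∀ y ∈ l, y < x) :
    l.minimum < (x : WithTop ℕ) := by
  obtain ⟨y, hy⟩ := List.exists_mem_of_ne_nil l hne
  calc l.minimum ≤ ↑y := List.minimum_le_of_mem' hy
    _ < ↑x := by exact_mod_cast h y hy

theorem grow_mem_spec (x : ℕ) :
    ∀ t, IsBinary t → ∀ t' ∈ grow x t, IsBinary t' ∧ (leaves t').Perm (x :: leaves t) := by
  refine binInd ?_ ?_
  · intro i t' ht'
    simp only [grow_leaf, List.mem_singleton] at ht'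
    subst ht'
    refine ⟨(isBinary_pair _ _).mpr ⟨by simp, by simp⟩, ?_⟩
    simp only [leaves_pair, leaves_leaf']
    exact List.Perm.swap x i []
  · intro a b hba hbb iha ihb t' ht'
    rw [grow_pair] at ht'
    rcases List.mem_cons.mp ht' with h0 | hmem
    · subst h0
      refine ⟨(isBinary_pair _ _).mpr ⟨(isBinary_pair _ _).mpr ⟨hba, hbb⟩, by simp⟩, ?_⟩
      simp only [leaves_pair, leaves_leaf']
      exact List.perm_append_comm (l₁ := leaves a ++ leaves b) (l₂ := [x])
    rcases List.mem_append.mp hmem with h2 | h3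
    · obtain ⟨a', ha', rfl⟩ := List.mem_map.mp h2
      obtain ⟨hba', hpa'⟩ := iha a' ha'
      refine ⟨(isBinary_pair _ _).mpr ⟨hba', hbb⟩, ?_⟩
      simp only [leaves_pair]
      have := hpa'.append_right (leaves b)
      simpa using this
    · obtain ⟨b', hb', rfl⟩ := List.mem_map.mp h3
      obtain ⟨hbb', hpb'⟩ := ihb b' hb'
      refine ⟨(isBinary_pair _ _).mpr ⟨hba, hbb'⟩, ?_⟩
      simp only [leaves_pair]
      have h1 := hpb'.append_left (leaves a)
      have h2 : (leaves a ++ x :: leaves b).Perm (x :: (leaves a ++ leaves b)) :=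
        List.perm_middle
      exact h1.trans h2

theorem grow_canonical (x : ℕ) :
    ∀ t, IsBinary t → Canonical t → (∀ y ∈ leaves t, y < x) →
      ∀ t' ∈ grow x t, Canonical t' := by
  refine binInd ?_ ?_
  · intro i _ hlt t' ht'
    simp only [grow_leaf, List.mem_singleton] at ht'
    subst ht'
    rw [canonical_pair]
    refine ⟨?_, by simp, by simp⟩
    simp only [leaves_leaf', List.minimum_singleton]
    exact_mod_cast hlt i (by simp)
  · intro a b hba hbb iha ihb hc hlt t' ht'
    rw [canonical_pair] at hc
    obtain ⟨hmin, hca, hcb⟩ := hc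
    simp only [leaves_pair, List.mem_append] at hlt
    have hanil : leaves a ≠ [] := leaves_ne_nil_of_isBinary a hba
    have hbnil : leaves b ≠ [] := leaves_ne_nil_of_isBinary b hbb
    have hlta : ∀ y ∈ leaves a, y < x := fun y hy => hlt y (Or.inl hy)
    have hltb : ∀ y ∈ leaves b, y < x := fun y hy => hlt y (Or.inr hy)
    rw [grow_pair] at ht'
    rcases List.mem_cons.mp ht' with h0 | hmem
    · subst h0
      rw [canonical_pair]
      refine ⟨?_, (canonical_pair a b).mpr ⟨hmin, hca, hcb⟩, by simp⟩
      simp only [leaves_leaf', List.minimum_singleton, leaves_pair]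
      refine minimum_lt_of_forall (by simp [hanil]) ?_
      intro y hy
      rcases List.mem_append.mp hy with h | h
      · exact hlta y h
      · exact hltb y h
    rcases List.mem_append.mp hmem with h2 | h3
    · obtain ⟨a', ha', rfl⟩ := List.mem_map.mp h2
      have hpa' := (grow_mem_spec x a hba a' ha').2
      rw [canonical_pair]
      refine ⟨?_, iha hca hlta a' ha', hcb⟩
      rw [minimum_perm hpa', List.minimum_cons]
      exact lt_of_le_of_lt (min_le_right _ _) hmin
    · obtain ⟨b', hb', rfl⟩ := List.mem_map.mp h3
      have hpb' := (grow_mem_spec x b hbb b' hb').2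
      rw [canonical_pair]
      refine ⟨?_, hca, ihb hcb hltb b' hb'⟩
      rw [minimum_perm hpb', List.minimum_cons]
      exact lt_min (minimum_lt_of_forall hanil hlta) hmin

end PTree
namespace PTree

def isLeafB (x : ℕ) : PTree → Bool
  | .leaf y => y == x
  | _ => false

def del (x : ℕ) : PTree → PTree
  | .node [a, b] =>
      if isLeafB x b then a
      else if x ∈ a.leaves then .node [del x a, b] else .node [a, del x b]
  | t => t

theorem isLeafB_false {x : ℕ} {b : PTree} (h : x ∉ leaves b) : isLeafB x b = false := by
  cases b with
  | leaf y =>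
    simp only [leaves_leaf', List.mem_singleton] at h
    simp [isLeafB, Ne.symm h]
  | node ts => rfl

theorem grow_shape (x : ℕ) :
    ∀ t, IsBinary t → ∀ t' ∈ grow x t, ∃ u v, t' = .node [u, v] := by
  refine binInd ?_ ?_
  · intro i t' ht'
    simp only [grow_leaf, List.mem_singleton] at ht'
    exact ⟨_, _, ht'⟩
  · intro a b _ _ _ _ t' ht'
    rw [grow_pair] at ht'
    rcases List.mem_cons.mp ht' with h0 | hmem
    · exact ⟨_, _, h0⟩
    rcases List.mem_append.mp hmem with h2 | h3
    · obtain ⟨a', _, rfl⟩ := List.mem_map.mp h2; exact ⟨_, _, rfl⟩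
    · obtain ⟨b', _, rfl⟩ := List.mem_map.mp h3; exact ⟨_, _, rfl⟩

theorem grow_del (x : ℕ) :
    ∀ t, IsBinary t → x ∉ leaves t → ∀ t' ∈ grow x t, del x t' = t := by
  refine binInd ?_ ?_
  · intro i _ t' ht'
    simp only [grow_leaf, List.mem_singleton] at ht'
    subst ht'
    rw [del]
    simp [isLeafB]
  · intro a b hba hbb iha ihb hx t' ht'
    simp only [leaves_pair, List.mem_append] at hx
    push_neg at hx
    obtain ⟨hxa, hxb⟩ := hx
    rw [grow_pair] at ht'
    rcases List.mem_cons.mp ht' with h0 | hmem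
    · subst h0
      rw [del]
      simp [isLeafB]
    rcases List.mem_append.mp hmem with h2 | h3
    · obtain ⟨a', ha', rfl⟩ := List.mem_map.mp h2
      have hxa' : x ∈ leaves a' :=
        ((grow_mem_spec x a hba a' ha').2.mem_iff).mpr (by simp)
      rw [del, if_neg (by simp [isLeafB_false hxb]), if_pos hxa']
      rw [iha hxa a' ha']
    · obtain ⟨b', hb', rfl⟩ := List.mem_map.mp h3
      obtain ⟨u, v, huv⟩ := grow_shape x b hbb b' hb'
      have hlf : isLeafB x b' = false := by rw [huv]; rfl
      rw [del, if_neg (by simp [hlf]), if_neg hxa]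
      rw [ihb hxb b' hb']

theorem grow_nodup (x : ℕ) :
    ∀ t, IsBinary t → x ∉ leaves t → (grow x t).Nodup := by
  refine binInd ?_ ?_
  · intro i _
    simp
  · intro a b hba hbb iha ihb hx
    simp only [leaves_pair, List.mem_append] at hx
    push_neg at hx
    obtain ⟨hxa, hxb⟩ := hx
    have hbnil : leaves b ≠ [] := leaves_ne_nil_of_isBinary b hbb
    rw [grow_pair]
    rw [List.nodup_cons]
    constructor
    · intro hmem
      rcases List.mem_append.mp hmem with h2 | h3
      · obtain ⟨a', _, heq⟩ := List.mem_map.mp h2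
        have : b = .leaf x := by
          have := (PTree.node.injEq _ _).mp heq.symm
          simp at this
          exact this.2.symm
        rw [this] at hxb
        simp at hxb
      · obtain ⟨b', _, heq⟩ := List.mem_map.mp h3
        have : a = PTree.node [a, b] := by
          have := (PTree.node.injEq _ _).mp heq.symm
          simp at this
          exact this.1.symm
        have hlen := congrArg (fun t => (leaves t).length) this
        simp only [leaves_pair, List.length_append] at hlen
        have : (leaves b).length ≠ 0 := by
          simpa [List.length_eq_zero_iff] using hbnil
        omega
    · rw [List.nodup_append]
      refine ⟨List.Nodup.map ?_ (iha hxa), List.Nodup.map ?_ (ihb hxb), ?_⟩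
      · intro u v huv
        have := (PTree.node.injEq _ _).mp huv
        simpa using this
      · intro u v huv
        have := (PTree.node.injEq _ _).mp huv
        simpa using this
      · intro t1 h1 t2 h2 h12
        subst h12
        obtain ⟨a', ha', rfl⟩ := List.mem_map.mp h1
        obtain ⟨b', hb', heq⟩ := List.mem_map.mp h2
        have := (PTree.node.injEq _ _).mp heq.symm
        simp at this
        have hxa' : x ∈ leaves a' :=
          ((grow_mem_spec x a hba a' ha').2.mem_iff).mpr (by simp)
        rw [← this.1] at hxa
        exact hxa hxa'

theorem grow_length (x : ℕ) :
    ∀ t, IsBinary t → (grow x t).length = 2 * (leaves t).length - 1 := by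
  refine binInd ?_ ?_
  · intro i; simp
  · intro a b hba hbb iha ihb
    have ha1 : 1 ≤ (leaves a).length :=
      List.length_pos_iff.mpr (leaves_ne_nil_of_isBinary a hba)
    have hb1 : 1 ≤ (leaves b).length :=
      List.length_pos_iff.mpr (leaves_ne_nil_of_isBinary b hbb)
    rw [grow_pair]
    simp only [List.length_cons, List.length_append, List.length_map, leaves_pair, iha, ihb]
    omega

end PTree
namespace PTree

theorem sum_map_add_const {α : Type*} (l : List α) (f : α → ℕ) (c : ℕ) :
    (l.map (fun a => f a + c)).sum = (l.map f).sum + l.length * c := by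
  induction l with
  | nil => simp
  | cons a l ih => simp [ih]; ring

theorem grow_sackin (x : ℕ) :
    ∀ t, IsBinary t → (leaves t).Nodup → x ∉ leaves t →
      ((grow x t).map Sackin).sum
        = (2 * (leaves t).length + 2) * Sackin t + (leaves t).length + 1 := by
  refine binInd ?_ ?_
  · intro i _ hx
    simp only [leaves_leaf', List.mem_singleton] at hx
    rw [grow_leaf]
    simp only [List.map_cons, List.map_nil, List.sum_cons, List.sum_nil]
    rw [sackin_pair _ _ (by simp [Ne.symm hx])]
    simp
  · intro a b hba hbb iha ihb hnd hx
    simp only [leaves_pair, List.mem_append] at hx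
    push_neg at hx
    obtain ⟨hxa, hxb⟩ := hx
    simp only [leaves_pair] at hnd
    have hnda : (leaves a).Nodup := hnd.of_append_left
    have hndb : (leaves b).Nodup := hnd.of_append_right
    have hdisj : (leaves a).Disjoint (leaves b) := List.disjoint_of_nodup_append hnd
    obtain ⟨p', hp⟩ : ∃ p', (leaves a).length = p' + 1 := by
      have := List.length_pos_iff.mpr (leaves_ne_nil_of_isBinary a hba); exact ⟨(leaves a).length - 1, by omega⟩
    obtain ⟨q', hq⟩ : ∃ q', (leaves b).length = q' + 1 := by
      have := List.length_pos_iff.mpr (leaves_ne_nil_of_isBinary b hbb); exact ⟨(leaves b).length - 1, by omega⟩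
    have hS : Sackin (.node [a, b])
        = Sackin a + Sackin b + (leaves a).length + (leaves b).length := sackin_pair a b hnd
    rw [grow_pair]
    simp only [List.map_cons, List.sum_cons, List.map_append, List.sum_append, List.map_map,
      Function.comp_def]
    -- first term
    have he0 : Sackin (.node [.node [a,b], .leaf x])
        = Sackin (.node [a,b]) + ((leaves a).length + (leaves b).length) + 1 := by
      rw [sackin_pair _ _ ?_]
      · simp [hS]
      · simp only [leaves_pair, leaves_leaf']
        rw [List.nodup_append]
        refine ⟨hnd, by simp, ?_⟩
        simp only [List.disjoint_singleton, List.mem_append]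
        intro y hy z hz hyz
        simp only [List.mem_singleton] at hz
        rw [hyz, hz] at hy
        rcases hy with h | h
        exacts [hxa h, hxb h]
    -- second block
    have h2 : ((grow x a).map (fun a' => Sackin (.node [a', b]))).sum
        = ((grow x a).map Sackin).sum
          + (grow x a).length * (Sackin b + ((leaves a).length + 1) + (leaves b).length) := by
      rw [← sum_map_add_const]
      congr 1
      apply List.map_congr_left
      intro a' ha'
      obtain ⟨hba', hpa'⟩ := grow_mem_spec x a hba a' ha'
      have hnd' : (leaves a' ++ leaves b).Nodup := by
        rw [List.nodup_append]
        refine ⟨hpa'.nodup_iff.mpr (by simp [hnda, hxa]), hndb, ?_⟩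
        intro y hy z hz hyz
        rw [← hyz] at hz
        have : y ∈ x :: leaves a := hpa'.mem_iff.mp hy
        rcases List.mem_cons.mp this with rfl | hmem
        · exact hxb hz
        · exact hdisj hmem hz
      rw [sackin_pair _ _ hnd', hpa'.length_eq]
      simp only [List.length_cons]
      ring
    have h3 : ((grow x b).map (fun b' => Sackin (.node [a, b']))).sum
        = ((grow x b).map Sackin).sum
          + (grow x b).length * (Sackin a + (leaves a).length + ((leaves b).length + 1)) := by
      rw [← sum_map_add_const]
      congr 1
      apply List.map_congr_left
      intro b' hb'
      obtain ⟨hbb', hpb'⟩ := grow_mem_spec x b hbb b' hb'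
      have hnd' : (leaves a ++ leaves b').Nodup := by
        rw [List.nodup_append]
        refine ⟨hnda, hpb'.nodup_iff.mpr (by simp [hndb, hxb]), ?_⟩
        intro y hy z hy' hyz
        rw [← hyz] at hy'
        have : y ∈ x :: leaves b := hpb'.mem_iff.mp hy'
        rcases List.mem_cons.mp this with rfl | hmem
        · exact hxa hy
        · exact hdisj hy hmem
      rw [sackin_pair _ _ hnd', hpb'.length_eq]
      simp only [List.length_cons]
      ring
    rw [he0, h2, h3, iha hnda hxa, ihb hndb hxb,
      grow_length x a hba, grow_length x b hbb, hS]
    simp only [leaves_pair, List.length_append, hp, hq]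
    have e1 : 2 * (p' + 1) - 1 = 2 * p' + 1 := by omega
    have e2 : 2 * (q' + 1) - 1 = 2 * q' + 1 := by omega
    rw [e1, e2]
    ring

end PTree
namespace PTree

def allTrees : ℕ → List PTree
  | 0 => []
  | 1 => [.leaf 1]
  | n+2 => (allTrees (n+1)).flatMap (grow (n+2))

theorem allTrees_spec : ∀ n, 1 ≤ n → ∀ t ∈ allTrees n,
    IsBinary t ∧ Canonical t ∧ (leaves t).Nodup ∧ (leaves t).toFinset = Finset.Icc 1 n := by
  intro n
  induction n with
  | zero => omega
  | succ n ih =>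
    intro _ t ht
    match n, ih, ht with
    | 0, _, ht =>
      have : t = .leaf 1 := by simpa [allTrees] using ht
      subst this
      refine ⟨by simp, by simp, by simp, ?_⟩
      simp
    | (m+1), ih, ht =>
      rw [show m + 1 + 1 = m + 2 from rfl, allTrees] at ht
      obtain ⟨t₀, ht₀, hg⟩ := List.mem_flatMap.mp ht
      obtain ⟨hb₀, hc₀, hnd₀, hfin₀⟩ := ih (by omega) t₀ ht₀
      have hlt : ∀ y ∈ leaves t₀, y < m + 2 := by
        intro y hy
        have : y ∈ Finset.Icc 1 (m+1) := hfin₀ ▸ List.mem_toFinset.mpr hy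
        have := Finset.mem_Icc.mp this
        omega
      have hx : (m+2) ∉ leaves t₀ := fun h => by have := hlt _ h; omega
      obtain ⟨hbt, hperm⟩ := grow_mem_spec (m+2) t₀ hb₀ t hg
      have hndx : ((m+2) :: leaves t₀).Nodup := List.nodup_cons.mpr ⟨hx, hnd₀⟩
      refine ⟨hbt, grow_canonical (m+2) t₀ hb₀ hc₀ hlt t hg, hperm.nodup_iff.mpr hndx, ?_⟩
      have h1 : (leaves t).toFinset = ((m+2) :: leaves t₀).toFinset := by
        apply List.toFinset_eq_of_perm _ _ hperm
      rw [h1]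
      simp only [List.toFinset_cons, hfin₀]
      ext y
      simp only [Finset.mem_insert, Finset.mem_Icc]
      omega

theorem allTrees_length_leaves : ∀ n, 1 ≤ n → ∀ t ∈ allTrees n, (leaves t).length = n := by
  intro n hn t ht
  obtain ⟨_, _, hnd, hfin⟩ := allTrees_spec n hn t ht
  have := List.toFinset_card_of_nodup hnd
  rw [hfin] at this
  simpa using this.symm

theorem mem_grow_self (x : ℕ) : ∀ a, IsBinary a → PTree.node [a, .leaf x] ∈ grow x a := by
  refine binInd ?_ ?_
  · intro i; simp
  · intro a b _ _ _ _; rw [grow_pair]; exact List.mem_cons_self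

theorem two_le_length_leaves_node : ∀ ts, IsBinary (.node ts) → 2 ≤ (leaves (.node ts)).length := by
  intro ts hb
  rw [IsBinary] at hb
  obtain ⟨h2, hall⟩ := hb
  match ts, h2, hall with
  | [u, v], _, hall =>
    have hu : IsBinary u := by simpa using hall ⟨u, by simp⟩ (by simp)
    have hv : IsBinary v := by simpa using hall ⟨v, by simp⟩ (by simp)
    have h1 := List.length_pos_iff.mpr (leaves_ne_nil_of_isBinary u hu)
    have h2 := List.length_pos_iff.mpr (leaves_ne_nil_of_isBinary v hv)
    simp only [leaves_pair, List.length_append]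
    omega

theorem grow_complete (x : ℕ) :
    ∀ T, IsBinary T → Canonical T → (leaves T).Nodup → x ∈ leaves T →
      (∀ y ∈ leaves T, y ≤ x) → 2 ≤ (leaves T).length →
      ∃ t, IsBinary t ∧ Canonical t ∧ (leaves t).Nodup ∧
        ((x :: leaves t).Perm (leaves T)) ∧ T ∈ grow x t := by
  refine binInd ?_ ?_
  · intro i _ _ _ _ hlen
    simp at hlen
  · intro a b hba hbb iha ihb hcan hnd hxmem hub hlen
    rw [canonical_pair] at hcan
    obtain ⟨hmin, hca, hcb⟩ := hcan
    simp only [leaves_pair, List.mem_append] at hxmem hub ⊢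
    simp only [leaves_pair] at hnd
    have hnda := hnd.of_append_left
    have hndb := hnd.of_append_right
    have hdisj : (leaves a).Disjoint (leaves b) := List.disjoint_of_nodup_append hnd
    have hanil : leaves a ≠ [] := leaves_ne_nil_of_isBinary a hba
    have hbnil : leaves b ≠ [] := leaves_ne_nil_of_isBinary b hbb
    have huba : ∀ y ∈ leaves a, y ≤ x := fun y hy => hub y (Or.inl hy)
    have hubb : ∀ y ∈ leaves b, y ≤ x := fun y hy => hub y (Or.inr hy)
    rcases hxmem with hxa | hxb
    · -- x in left subtree
      have hxnb : x ∉ leaves b := fun h => hdisj hxa h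
      -- a cannot be a leaf
      cases a with
      | leaf i =>
        simp only [leaves_leaf', List.mem_singleton] at hxa
        subst hxa
        exfalso
        obtain ⟨y, hy⟩ := List.exists_mem_of_ne_nil _ hbnil
        have h1 : y < x := lt_of_le_of_ne (hubb y hy) (fun h => hxnb (h ▸ hy))
        have h2 : (x : WithTop ℕ) < (leaves b).minimum := by
          simpa using hmin
        have h3 := List.minimum_le_of_mem' hy
        have h4 : (x : WithTop ℕ) < (y : WithTop ℕ) := lt_of_lt_of_le h2 h3
        have : x < y := by exact_mod_cast h4
        omega
      | node ts =>
        set a := PTree.node ts with ha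
        have hlen2 : 2 ≤ (leaves a).length := two_le_length_leaves_node ts hba
        obtain ⟨a₀, hb₀, hc₀, hnd₀, hperm₀, hmem₀⟩ := iha hca hnda hxa huba hlen2
        refine ⟨.node [a₀, b], (isBinary_pair _ _).mpr ⟨hb₀, hbb⟩, ?_, ?_, ?_, ?_⟩
        · rw [canonical_pair]
          refine ⟨?_, hc₀, hcb⟩
          have hsub : ∀ y ∈ leaves a₀, y ∈ leaves a :=
            fun y hy => hperm₀.mem_iff.mp (List.mem_cons_of_mem _ hy)
          have ha₀nil : leaves a₀ ≠ [] := by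
            intro h
            have := hperm₀.length_eq
            rw [h] at this
            simp at this
            omega
          have hminle : (leaves a₀).minimum ≤ (x : WithTop ℕ) := by
            obtain ⟨y, hy⟩ := List.exists_mem_of_ne_nil _ ha₀nil
            calc (leaves a₀).minimum ≤ ↑y := List.minimum_le_of_mem' hy
              _ ≤ ↑x := by exact_mod_cast huba y (hsub y hy)
          have heq : (leaves a).minimum = min (↑x) (leaves a₀).minimum :=
            (minimum_perm hperm₀).symm.trans (List.minimum_cons _ _)
          have : (leaves a).minimum = (leaves a₀).minimum := by
            rw [heq, min_eq_right hminle]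
          rw [← this]
          exact hmin
        · simp only [leaves_pair]
          rw [List.nodup_append]
          refine ⟨hnd₀, hndb, ?_⟩
          intro y hy z hy' hyz
          rw [← hyz] at hy'
          have : y ∈ leaves a := hperm₀.mem_iff.mp (List.mem_cons_of_mem _ hy)
          exact hdisj this hy'
        · simp only [leaves_pair]
          have h1 : (x :: (leaves a₀ ++ leaves b)).Perm ((x :: leaves a₀) ++ leaves b) := by
            simp
          exact h1.trans (hperm₀.append_right _)
        · rw [grow_pair]
          refine List.mem_cons_of_mem _ (List.mem_append.mpr (Or.inl ?_))
          exact List.mem_map.mpr ⟨a, hmem₀, rfl⟩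
    · -- x in right subtree
      have hxna : x ∉ leaves a := fun h => hdisj h hxb
      cases b with
      | leaf i =>
        simp only [leaves_leaf', List.mem_singleton] at hxb
        subst hxb
        exact ⟨a, hba, hca, hnda, by simpa using List.perm_append_comm (l₁ := [x]) (l₂ := leaves a),
          mem_grow_self x a hba⟩
      | node ts =>
        set b := PTree.node ts with hb
        have hlen2 : 2 ≤ (leaves b).length := two_le_length_leaves_node ts hbb
        obtain ⟨b₀, hb₀, hc₀, hnd₀, hperm₀, hmem₀⟩ := ihb hcb hndb hxb hubb hlen2
        refine ⟨.node [a, b₀], (isBinary_pair _ _).mpr ⟨hba, hb₀⟩, ?_, ?_, ?_, ?_⟩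
        · rw [canonical_pair]
          refine ⟨?_, hca, hc₀⟩
          have heq : (leaves b).minimum = min (↑x) (leaves b₀).minimum :=
            (minimum_perm hperm₀).symm.trans (List.minimum_cons _ _)
          have : (leaves a).minimum < (leaves b₀).minimum :=
            lt_of_lt_of_le (heq ▸ hmin) (min_le_right _ _)
          exact this
        · simp only [leaves_pair]
          rw [List.nodup_append]
          refine ⟨hnda, hnd₀, ?_⟩
          intro y hy z hy' hyz
          rw [← hyz] at hy'
          have : y ∈ leaves b := hperm₀.mem_iff.mp (List.mem_cons_of_mem _ hy')
          exact hdisj hy this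
        · simp only [leaves_pair]
          have h1 : (x :: (leaves a ++ leaves b₀)).Perm (leaves a ++ (x :: leaves b₀)) :=
            List.perm_middle.symm
          exact h1.trans (hperm₀.append_left _)
        · rw [grow_pair]
          refine List.mem_cons_of_mem _ (List.mem_append.mpr (Or.inr ?_))
          exact List.mem_map.mpr ⟨b, hmem₀, rfl⟩

end PTree
namespace PTree

theorem allTrees_complete : ∀ n, ∀ T, IsBinary T → Canonical T → (leaves T).Nodup →
    (leaves T).toFinset = Finset.Icc 1 (n+1) → T ∈ allTrees (n+1) := by
  intro n
  induction n with
  | zero =>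
    intro T hb _ hnd hfin
    have hcard : (leaves T).length = 1 := by
      have := List.toFinset_card_of_nodup hnd
      rw [hfin] at this
      simpa using this.symm
    cases T with
    | leaf i =>
      have : i ∈ Finset.Icc 1 1 := by
        rw [← hfin]; simp
      have : i = 1 := by simpa using this
      subst this
      simp [allTrees]
    | node ts =>
      have := two_le_length_leaves_node ts hb
      omega
  | succ n ih =>
    intro T hb hc hnd hfin
    have hcard : (leaves T).length = n + 2 := by
      have := List.toFinset_card_of_nodup hnd
      rw [hfin] at this
      simpa using this.symm
    have hxmem : (n+2) ∈ leaves T := by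
      have : (n+2) ∈ (leaves T).toFinset := by rw [hfin]; simp
      simpa using this
    have hub : ∀ y ∈ leaves T, y ≤ n + 2 := by
      intro y hy
      have : y ∈ Finset.Icc 1 (n+2) := hfin ▸ List.mem_toFinset.mpr hy
      have := Finset.mem_Icc.mp this
      omega
    obtain ⟨t, hbt, hct, hndt, hperm, hmem⟩ :=
      grow_complete (n+2) T hb hc hnd hxmem hub (by omega)
    have hndx : ((n+2) :: leaves t).Nodup := hperm.nodup_iff.mpr hnd
    have hxnot : (n+2) ∉ leaves t := (List.nodup_cons.mp hndx).1
    have hfint : (leaves t).toFinset = Finset.Icc 1 (n+1) := by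
      have h1 : ((n+2) :: leaves t).toFinset = Finset.Icc 1 (n+2) := by
        rw [List.toFinset_eq_of_perm _ _ hperm, hfin]
      simp only [List.toFinset_cons] at h1
      ext y
      constructor
      · intro hy
        have hyI : y ∈ Finset.Icc 1 (n+2) := by
          rw [← h1]; exact Finset.mem_insert_of_mem hy
        have := Finset.mem_Icc.mp hyI
        have hyne : y ≠ n + 2 := by
          rintro rfl
          exact hxnot (List.mem_toFinset.mp hy)
        rw [Finset.mem_Icc]
        omega
      · intro hy
        have := Finset.mem_Icc.mp hy
        have : y ∈ insert (n+2) (leaves t).toFinset := by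
          rw [h1, Finset.mem_Icc]; omega
        rcases Finset.mem_insert.mp this with rfl | h
        · omega
        · exact h
    have ht : t ∈ allTrees (n+1) := ih t hbt hct hndt hfint
    rw [show n + 1 + 1 = n + 2 from rfl, allTrees]
    exact List.mem_flatMap.mpr ⟨t, ht, hmem⟩

theorem allTrees_nodup : ∀ n, (allTrees n).Nodup := by
  intro n
  induction n with
  | zero => simp [allTrees]
  | succ n ih =>
    match n, ih with
    | 0, _ => simp [allTrees]
    | (m+1), ih =>
      rw [show m + 1 + 1 = m + 2 from rfl, allTrees]
      rw [List.nodup_flatMap]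
      constructor
      · intro t ht
        obtain ⟨hb, _, _, hfin⟩ := allTrees_spec (m+1) (by omega) t ht
        have hx : (m+2) ∉ leaves t := by
          intro h
          have : (m+2) ∈ Finset.Icc 1 (m+1) := hfin ▸ List.mem_toFinset.mpr h
          have := Finset.mem_Icc.mp this
          omega
        exact grow_nodup (m+2) t hb hx
      · rw [List.pairwise_iff_forall_sublist]
        intro t₁ t₂ hsub
        have h1 : t₁ ∈ allTrees (m+1) := hsub.subset (by simp)
        have h2 : t₂ ∈ allTrees (m+1) := hsub.subset (by simp)
        intro T hT1 hT2
        obtain ⟨hb1, _, _, hfin1⟩ := allTrees_spec (m+1) (by omega) t₁ h1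
        obtain ⟨hb2, _, _, hfin2⟩ := allTrees_spec (m+1) (by omega) t₂ h2
        have hx1 : (m+2) ∉ leaves t₁ := by
          intro h
          have : (m+2) ∈ Finset.Icc 1 (m+1) := hfin1 ▸ List.mem_toFinset.mpr h
          have := Finset.mem_Icc.mp this; omega
        have hx2 : (m+2) ∉ leaves t₂ := by
          intro h
          have : (m+2) ∈ Finset.Icc 1 (m+1) := hfin2 ▸ List.mem_toFinset.mpr h
          have := Finset.mem_Icc.mp this; omega
        have e1 := grow_del (m+2) t₁ hb1 hx1 T hT1
        have e2 := grow_del (m+2) t₂ hb2 hx2 T hT2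
        have : t₁ = t₂ := e1.symm.trans e2
        have hne : t₁ ≠ t₂ := by
          have hnd2 : [t₁, t₂].Nodup := hsub.nodup ih
          simpa using hnd2
        exact absurd this hne

end PTree
namespace PTree

def streeSum (n : ℕ) : ℕ := ((allTrees n).map Sackin).sum
def gcount (n : ℕ) : ℕ := (allTrees n).length

theorem sum_map_const' {α : Type*} (l : List α) (c : ℕ) :
    (l.map (fun _ => c)).sum = l.length * c := by
  induction l with
  | nil => simp
  | cons a l ih => simp [ih]; ring

theorem sum_map_mul_left' {α : Type*} (l : List α) (f : α → ℕ) (c : ℕ) :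
    (l.map (fun a => c * f a)).sum = c * (l.map f).sum := by
  induction l with
  | nil => simp
  | cons a l ih => simp [ih, mul_add]

theorem sum_map_flatMap {α β : Type*} (l : List α) (f : α → List β) (g : β → ℕ) :
    ((l.flatMap f).map g).sum = (l.map (fun a => ((f a).map g).sum)).sum := by
  induction l with
  | nil => simp
  | cons a l ih => simp [ih]

theorem notmem_of_allTrees {n : ℕ} (hn : 1 ≤ n) {t : PTree} (ht : t ∈ allTrees n) :
    (n + 1) ∉ leaves t := by
  obtain ⟨_, _, _, hfin⟩ := allTrees_spec n hn t ht
  intro h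
  have : (n+1) ∈ Finset.Icc 1 n := hfin ▸ List.mem_toFinset.mpr h
  have := Finset.mem_Icc.mp this
  omega

theorem gcount_succ (m : ℕ) : gcount (m+2) = (2*(m+1) - 1) * gcount (m+1) := by
  rw [gcount, gcount, show m+1+1 = m+2 from rfl, allTrees, List.length_flatMap]
  have h : ∀ t ∈ allTrees (m+1), (grow (m+2) t).length = 2*(m+1) - 1 := by
    intro t ht
    obtain ⟨hb, _, _, _⟩ := allTrees_spec (m+1) (by omega) t ht
    rw [grow_length (m+2) t hb, allTrees_length_leaves (m+1) (by omega) t ht]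
  rw [List.map_congr_left h, sum_map_const']
  ring

theorem streeSum_succ (m : ℕ) :
    streeSum (m+2) = (2*(m+1)+2) * streeSum (m+1) + ((m+1)+1) * gcount (m+1) := by
  rw [streeSum, show m+1+1 = m+2 from rfl, allTrees, sum_map_flatMap]
  have h : ∀ t ∈ allTrees (m+1),
      ((grow (m+2) t).map Sackin).sum = (2*(m+1)+2) * Sackin t + ((m+1)+1) := by
    intro t ht
    obtain ⟨hb, _, hnd, _⟩ := allTrees_spec (m+1) (by omega) t ht
    have hx := notmem_of_allTrees (by omega) ht
    rw [grow_sackin (m+2) t hb hnd hx, allTrees_length_leaves (m+1) (by omega) t ht]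
    omega
  rw [List.map_congr_left h, sum_map_add_const, sum_map_mul_left']
  rw [streeSum, gcount]
  ring

@[simp] theorem streeSum_one : streeSum 1 = 0 := by
  simp [streeSum, allTrees]

@[simp] theorem gcount_one : gcount 1 = 1 := by
  simp [gcount, allTrees]

end PTree
namespace PTree

noncomputable def U (m : ℕ) : ℝ :=
  ∑ i ∈ Finset.range m,
    ((m - 1 + i).factorial : ℝ) / ((i.factorial : ℝ) * 2 ^ i) * ((m - i : ℕ) : ℝ)^2

noncomputable def dtel (m : ℕ) (i : ℕ) : ℝ :=
  ((m - 1 + i).factorial : ℝ) / ((i.factorial : ℝ) * 2 ^ i) *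
    (-2 * (i:ℝ) * ((i:ℝ) - m) * ((i:ℝ) - m - 2))

@[simp] theorem U_zero : U 0 = 0 := by simp [U]

theorem Urec (m : ℕ) :
    U (m+1) = (2*((m:ℝ)+1)) * U m + ((2*m).factorial : ℝ) / (2 ^ m * (m.factorial : ℝ)) := by
  rcases Nat.eq_zero_or_pos m with rfl | hm
  · norm_num [U]
  rw [U, Finset.sum_range_succ]
  have hlast : ((m + 1 - 1 + m).factorial : ℝ) / ((m.factorial : ℝ) * 2 ^ m)
        * ((m + 1 - m : ℕ) : ℝ)^2
      = ((2*m).factorial : ℝ) / (2 ^ m * (m.factorial : ℝ)) := by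
    have h1 : m + 1 - 1 + m = 2*m := by omega
    have h2 : m + 1 - m = 1 := by omega
    rw [h1, h2]
    push_cast
    ring
  rw [hlast]
  congr 1
  rw [U, Finset.mul_sum]
  rw [← sub_eq_zero, ← Finset.sum_sub_distrib]
  have key : ∀ i ∈ Finset.range m,
      ((m + 1 - 1 + i).factorial : ℝ) / ((i.factorial : ℝ) * 2 ^ i) * ((m + 1 - i : ℕ) : ℝ)^2
        - 2*((m:ℝ)+1) * (((m - 1 + i).factorial : ℝ) / ((i.factorial : ℝ) * 2 ^ i)
            * ((m - i : ℕ) : ℝ)^2)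
      = dtel m (i+1) - dtel m i := by
    intro i hi
    have him : i < m := Finset.mem_range.mp hi
    have hmain : ((m - 1 + i + 1 : ℕ) : ℝ) = (m:ℝ) + i := by
      have e : m - 1 + i + 1 = m + i := by omega
      rw [e]; push_cast; ring
    have hfact1 : ((m + 1 - 1 + i).factorial : ℝ)
        = ((m:ℝ) + i) * ((m - 1 + i).factorial : ℝ) := by
      have h1 : m + 1 - 1 + i = (m - 1 + i) + 1 := by omega
      rw [h1, Nat.factorial_succ, Nat.cast_mul, hmain]
    have hfact2 : ((m - 1 + (i+1)).factorial : ℝ)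
        = ((m:ℝ) + i) * ((m - 1 + i).factorial : ℝ) := by
      have h1 : m - 1 + (i+1) = (m - 1 + i) + 1 := by omega
      rw [h1, Nat.factorial_succ, Nat.cast_mul, hmain]
    have hfact3 : (((i+1)).factorial : ℝ) = ((i:ℝ) + 1) * (i.factorial : ℝ) := by
      rw [Nat.factorial_succ]; push_cast; ring
    have hcast1 : ((m + 1 - i : ℕ) : ℝ) = (m:ℝ) + 1 - (i:ℝ) := by
      push_cast [Nat.cast_sub (by omega : i ≤ m + 1)]
      ring
    have hcast2 : ((m - i : ℕ) : ℝ) = (m:ℝ) - (i:ℝ) := by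
      push_cast [Nat.cast_sub (by omega : i ≤ m)]
      ring
    simp only [dtel]
    rw [hfact1, hfact2, hfact3, hcast1, hcast2]
    push_cast
    have hne : (i.factorial : ℝ) ≠ 0 := Nat.cast_ne_zero.mpr (Nat.factorial_ne_zero i)
    have h2i : (2:ℝ) ^ i ≠ 0 := pow_ne_zero _ two_ne_zero
    have h2i1 : (2:ℝ) ^ (i+1) ≠ 0 := pow_ne_zero _ two_ne_zero
    have hii : ((i:ℝ) + 1) ≠ 0 := by positivity
    field_simp
    ring
  rw [Finset.sum_congr rfl key, Finset.sum_range_sub (dtel m)]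
  have hd0 : dtel m 0 = 0 := by simp [dtel]
  have hdm : dtel m m = 0 := by
    rw [dtel]
    have : ((m:ℝ) - m) = 0 := by ring
    rw [this]
    ring
  rw [hd0, hdm]
  ring

theorem gcount_real : ∀ m : ℕ, (gcount (m+1) : ℝ)
    = ((2*m).factorial : ℝ) / (2 ^ m * (m.factorial : ℝ)) := by
  intro m
  induction m with
  | zero => simp
  | succ m ih =>
    rw [gcount_succ m]
    push_cast [ih]
    have h1 : (2*(m+1) - 1 : ℕ) = 2*m + 1 := by omega
    have hfact1 : ((2*(m+1)).factorial : ℝ)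
        = (2*(m:ℝ)+2) * (2*(m:ℝ)+1) * ((2*m).factorial : ℝ) := by
      have e : 2*(m+1) = (2*m+1)+1 := by omega
      rw [e, Nat.factorial_succ, show 2*m+1 = (2*m)+1 from rfl, Nat.factorial_succ]
      push_cast
      ring
    have hfact2 : ((m+1).factorial : ℝ) = ((m:ℝ)+1) * (m.factorial : ℝ) := by
      rw [Nat.factorial_succ]; push_cast; ring
    rw [h1]; push_cast
    rw [hfact1, hfact2]
    have hm : (m.factorial : ℝ) ≠ 0 := Nat.cast_ne_zero.mpr (Nat.factorial_ne_zero m)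
    have h2m : (2:ℝ) ^ m ≠ 0 := pow_ne_zero _ two_ne_zero
    have hm1 : ((m:ℝ) + 1) ≠ 0 := by positivity
    field_simp
    ring

theorem streeSum_real : ∀ m : ℕ, (streeSum (m+1) : ℝ) = ((m:ℝ)+1) * U m := by
  intro m
  induction m with
  | zero => simp
  | succ m ih =>
    rw [show m+1+1 = m+2 from rfl, streeSum_succ m]
    push_cast [ih]
    rw [Urec m, gcount_real m]
    ring

end PTree
namespace PTree

def allTreesFinset (n : ℕ) : Finset PTree :=
  ⟨(allTrees n : Multiset PTree), by
    rw [Multiset.coe_nodup]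
    exact allTrees_nodup n⟩

theorem mem_allTreesFinset {n : ℕ} {T : PTree} :
    T ∈ allTreesFinset n ↔ T ∈ allTrees n := by
  simp [allTreesFinset, Finset.mem_mk]

theorem sum_allTreesFinset (n : ℕ) (f : PTree → ℝ) :
    ∑ T ∈ allTreesFinset n, f T = ((allTrees n).map f).sum := by
  simp [allTreesFinset, Finset.sum]

end PTree

theorem sum_sackin_over_binary_trees (n : ℕ) (hn : 3 ≤ n) :
    ∑ᶠ T ∈ {T : PTree | PTree.IsPhylo n T ∧ PTree.IsBinary T ∧ PTree.Canonical T},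
        (PTree.Sackin T : ℝ) =
      (n : ℝ) * ∑ k ∈ Finset.Icc 1 (n - 1),
        ((2 * n - k - 3).factorial : ℝ) * (k : ℝ) ^ 2 /
          (((n - k - 1).factorial : ℝ) * 2 ^ (n - k - 1)) := by
  obtain ⟨m, rfl⟩ : ∃ m, n = m + 1 := ⟨n - 1, by omega⟩
  have hm : 2 ≤ m := by omega
  have hset : {T : PTree | PTree.IsPhylo (m+1) T ∧ PTree.IsBinary T ∧ PTree.Canonical T}
      = ↑(PTree.allTreesFinset (m+1)) := by
    ext T
    simp only [Set.mem_setOf_eq, Finset.mem_coe, PTree.mem_allTreesFinset]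
    constructor
    · rintro ⟨⟨hp, hnd, hfin⟩, hb, hc⟩
      exact PTree.allTrees_complete m T hb hc hnd hfin
    · intro hT
      obtain ⟨hb, hc, hnd, hfin⟩ := PTree.allTrees_spec (m+1) (by omega) T hT
      exact ⟨⟨PTree.proper_of_isBinary T hb, hnd, hfin⟩, hb, hc⟩
  rw [hset, finsum_mem_coe_finset, PTree.sum_allTreesFinset]
  have hLHS : ((PTree.allTrees (m+1)).map (fun T => (PTree.Sackin T : ℝ))).sum
      = ((PTree.streeSum (m+1) : ℕ) : ℝ) := by
    rw [PTree.streeSum, Nat.cast_list_sum, List.map_map]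
    rfl
  rw [hLHS, PTree.streeSum_real m]
  congr 1
  · push_cast; ring
  rw [show m + 1 - 1 = m from rfl, PTree.U]
  refine (Finset.sum_bij' (fun (k : ℕ) (_ : k ∈ Finset.Icc 1 m) => m - k)
    (fun (i : ℕ) (_ : i ∈ Finset.range m) => m - i) ?_ ?_ ?_ ?_ ?_).symm
  · intro k hk
    have := Finset.mem_Icc.mp hk
    beta_reduce
    rw [Finset.mem_range]
    omega
  · intro i hi
    have := Finset.mem_range.mp hi
    beta_reduce
    rw [Finset.mem_Icc]
    omega
  · intro k hk
    have := Finset.mem_Icc.mp hk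
    show m - (m - k) = k
    omega
  · intro i hi
    have := Finset.mem_range.mp hi
    show m - (m - i) = i
    omega
  · intro k hk
    have hk' := Finset.mem_Icc.mp hk
    beta_reduce
    have e1 : 2 * (m+1) - k - 3 = m - 1 + (m - k) := by omega
    have e2 : m + 1 - k - 1 = m - k := by omega
    have e3 : m - (m - k) = k := by omega
    rw [e1, e2, e3]
    ring
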